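/- arXiv:1407.7776 — 3 statements merged into one kernel-verified Lean document; each statement's English description precedes it below -/
import Mathlib

section
/- Fix pairwise distinct z₁, …, z_n ∈ D and values w₁, …, w_n ∈ D, and suppose f ∈ U (analytic self-map of D) solves f(z_j) = w_j for all j. Then the hyperbolic difference quotients of the data satisfy |Δ^k_j| ≤ 1 for all 0 ≤ k ≤ n−1 and k+1 ≤ j ≤ n, where Δ^0_j = w_j and Δ^k_j = [Δ^{k−1}_j, Δ^{k−1}_k]/[z_j, z_k]. -/
open Complex Set ComplexConjugate Topology

noncomputable section

/-- The open unit disc in ℂ. -/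
def unitDisc : Set ℂ := {z : ℂ | ‖z‖ < 1}

/-- Pseudohyperbolic distance ρ(a,b) = |(a-b)/(1 - conj b · a)|. -/
def pd (a b : ℂ) : ℝ := ‖(a - b) / (1 - conj b * a)‖

/-- Hyperbolic distance β = log((1+ρ)/(1-ρ)). -/
def hd (a b : ℂ) : ℝ := Real.log ((1 + pd a b) / (1 - pd a b))

/-- The complex pseudohyperbolic "bracket" [a,b] = (b-a)/(1 - conj b · a). -/
def hbr (a b : ℂ) : ℂ := (b - a) / (1 - conj b * a)

/-- f is an analytic self-map of the unit disc. -/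
def IsSelfMap (f : ℂ → ℂ) : Prop :=
  DifferentiableOn ℂ f unitDisc ∧ Set.MapsTo f unitDisc unitDisc

/-- Hyperbolic derivative f^h(z) = (1-|z|²) f'(z) / (1-|f z|²). -/
def hypDeriv (f : ℂ → ℂ) (z : ℂ) : ℂ :=
  (1 - (‖z‖ : ℂ) ^ 2) * deriv f z / (1 - (‖f z‖ : ℂ) ^ 2)

/-- The triangle of hyperbolic difference quotients:
`hdq z w 0 j = w j` and `Δ^{k+1}_j = [Δ^k_j, Δ^k_{k+1}]/[z_j, z_{k+1}]`
(points indexed starting at 1, so `Δ^k` involves the point `z_k`). -/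
def hdq (z w : ℕ → ℂ) : ℕ → ℕ → ℂ
  | 0, j => w j
  | k + 1, j => hbr (hdq z w k j) (hdq z w k (k + 1)) / hbr (z j) (z (k + 1))

/-! ### Auxiliary lemmas -/

lemma unitDisc_eq_ball : unitDisc = Metric.ball (0:ℂ) 1 := by
  ext z; simp [unitDisc, Metric.mem_ball, Complex.dist_eq]

lemma isOpen_unitDisc : IsOpen unitDisc := by
  rw [unitDisc_eq_ball]; exact Metric.isOpen_ball

lemma denom_ne_zero {a b : ℂ} (ha : ‖a‖ < 1) (hb : ‖b‖ < 1) :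
    1 - conj b * a ≠ 0 := by
  intro h
  have h1 : conj b * a = 1 := by linear_combination -h
  have h2 := congrArg norm h1
  rw [norm_mul, Complex.norm_conj, norm_one] at h2
  nlinarith [norm_nonneg a, norm_nonneg b]

/-- The Möbius map `ζ ↦ (a - ζ)/(1 - conj a ζ)`. Note `hbr ζ a = mob a ζ`. -/
def mob (a ζ : ℂ) : ℂ := (a - ζ) / (1 - conj a * ζ)

lemma hbr_eq_mob (a ζ : ℂ) : hbr ζ a = mob a ζ := rfl

lemma normSq_key (a ζ : ℂ) :
    Complex.normSq (1 - conj a * ζ) - Complex.normSq (a - ζ)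
      = (1 - Complex.normSq a) * (1 - Complex.normSq ζ) := by
  simp only [Complex.normSq_apply, Complex.mul_re, Complex.mul_im, Complex.sub_re,
    Complex.sub_im, Complex.conj_re, Complex.conj_im, Complex.one_re, Complex.one_im]
  ring

lemma mob_mem {a ζ : ℂ} (ha : ‖a‖ < 1) (hζ : ‖ζ‖ < 1) :
    ‖mob a ζ‖ < 1 := by
  have hd : (1:ℂ) - conj a * ζ ≠ 0 := denom_ne_zero hζ ha
  have hdpos : 0 < ‖1 - conj a * ζ‖ := norm_pos_iff.mpr hd
  rw [mob, norm_div, div_lt_one hdpos]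
  have hkey := normSq_key a ζ
  have hna : Complex.normSq a < 1 := by
    rw [← Complex.sq_norm]; nlinarith [norm_nonneg a]
  have hnζ : Complex.normSq ζ < 1 := by
    rw [← Complex.sq_norm]; nlinarith [norm_nonneg ζ]
  have h2 : Complex.normSq (a - ζ) < Complex.normSq (1 - conj a * ζ) := by nlinarith
  rw [← Complex.sq_norm, ← Complex.sq_norm (1 - conj a * ζ)] at h2
  nlinarith [norm_nonneg (a - ζ), norm_nonneg (1 - conj a * ζ)]

lemma mob_diff {a : ℂ} (ha : ‖a‖ < 1) :
    DifferentiableOn ℂ (mob a) unitDisc := by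
  apply DifferentiableOn.div
  · fun_prop
  · fun_prop
  · exact fun ζ hζ => denom_ne_zero hζ ha

lemma mob_self (a : ℂ) : mob a a = 0 := by simp [mob]

lemma mob_mob {a ζ : ℂ} (ha : ‖a‖ < 1) (hζ : ‖ζ‖ < 1) :
    mob a (mob a ζ) = ζ := by
  have hd : (1:ℂ) - conj a * ζ ≠ 0 := denom_ne_zero hζ ha
  have ht : (1:ℂ) - conj a * a ≠ 0 := denom_ne_zero ha ha
  rw [mob, mob]
  rw [show (1:ℂ) - conj a * ((a - ζ) / (1 - conj a * ζ))
      = (1 - conj a * a) / (1 - conj a * ζ) by field_simp; ring]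
  rw [show a - (a - ζ) / (1 - conj a * ζ)
      = ζ * ((1 - conj a * a) / (1 - conj a * ζ)) by
    rw [mul_div_assoc', eq_div_iff hd, sub_mul, div_mul_cancel₀ _ hd]; ring]
  exact mul_div_cancel_right₀ ζ (div_ne_zero ht hd)

lemma schwarz_pick {g : ℂ → ℂ} (hg : IsSelfMap g) {a ζ : ℂ}
    (ha : a ∈ unitDisc) (hζ : ζ ∈ unitDisc) :
    ‖mob (g a) (g ζ)‖ ≤ ‖mob a ζ‖ := by
  have haD : ‖a‖ < 1 := ha
  have hgaD : g a ∈ unitDisc := hg.2 ha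
  have hmob_maps : MapsTo (mob a) unitDisc unitDisc := fun x hx => mob_mem haD hx
  have hmob2_maps : MapsTo (mob (g a)) unitDisc unitDisc := fun x hx => mob_mem hgaD hx
  set h : ℂ → ℂ := (mob (g a)) ∘ (g ∘ (mob a)) with hh
  have hdiff : DifferentiableOn ℂ h unitDisc :=
    (mob_diff hgaD).comp (hg.1.comp (mob_diff haD) hmob_maps)
      ((hg.2.comp hmob_maps))
  have hmaps : MapsTo h unitDisc unitDisc :=
    (hmob2_maps.comp (hg.2.comp hmob_maps))
  have h0 : h 0 = 0 := by
    have : mob a 0 = a := by simp [mob]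
    simp [hh, Function.comp, this, mob_self]
  have hmem : mob a ζ ∈ unitDisc := mob_mem haD hζ
  have key := Complex.norm_le_norm_of_mapsTo_ball
    (by rw [← unitDisc_eq_ball]; exact hdiff)
    (fun x hx => Metric.ball_subset_closedBall
      (by rw [← unitDisc_eq_ball]; exact hmaps (by rw [unitDisc_eq_ball]; exact hx)))
    h0 (show ‖mob a ζ‖ < 1 from hmem)
  have hval : h (mob a ζ) = mob (g a) (g ζ) := by
    simp [hh, Function.comp, mob_mob haD hζ]
  rw [hval] at key
  simpa [Complex.dist_eq] using key

/-- Main dichotomy step: from a self-map interpolating level `k`, either there is a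
self-map interpolating level `k+1`, or level `k+1` is a unimodular constant. -/
lemma step_dichotomy {g : ℂ → ℂ} (hg : IsSelfMap g) {a : ℂ} (ha : a ∈ unitDisc) :
    (∃ G : ℂ → ℂ, IsSelfMap G ∧ ∀ ζ ∈ unitDisc, ζ ≠ a →
        G ζ = hbr (g ζ) (g a) / hbr ζ a) ∨
    (∃ lam : ℂ, ‖lam‖ = 1 ∧ ∀ ζ ∈ unitDisc, ζ ≠ a →
        hbr (g ζ) (g a) / hbr ζ a = lam) := by
  classical
  have haD : ‖a‖ < 1 := ha
  have hgaD : ‖g a‖ < 1 := hg.2 ha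
  set F : ℂ → ℂ := fun ζ => dslope g a ζ * (1 - conj a * ζ) / (1 - conj (g a) * g ζ)
    with hF_def
  have hF_eq : ∀ ζ ∈ unitDisc, ζ ≠ a → F ζ = hbr (g ζ) (g a) / hbr ζ a := by
    intro ζ hζ hne
    have hζD : ‖ζ‖ < 1 := hζ
    have hgζD : ‖g ζ‖ < 1 := hg.2 hζ
    have h1 : (1:ℂ) - conj a * ζ ≠ 0 := denom_ne_zero hζD haD
    have h2 : (1:ℂ) - conj (g a) * g ζ ≠ 0 := denom_ne_zero hgζD hgaD
    have h3 : ζ - a ≠ 0 := sub_ne_zero.mpr hne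
    have h4 : a - ζ ≠ 0 := sub_ne_zero.mpr (Ne.symm hne)
    rw [hF_def]
    simp only [hbr, dslope_of_ne _ hne, slope_def_field]
    field_simp
    ring
  have hFdiff : DifferentiableOn ℂ F unitDisc := by
    apply DifferentiableOn.div
    · exact (((differentiableOn_dslope (isOpen_unitDisc.mem_nhds ha)).mpr hg.1).mul
        (by fun_prop))
    · exact (differentiableOn_const 1).sub (hg.1.const_mul _)
    · exact fun ζ hζ => denom_ne_zero (hg.2 hζ) hgaD
  have hF_le : ∀ ζ ∈ unitDisc, ‖F ζ‖ ≤ 1 := by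
    intro ζ hζ
    rcases eq_or_ne ζ a with rfl | hne
    · -- continuity argument at ζ = a
      have hcont : ContinuousAt F ζ :=
        (hFdiff.continuousOn.continuousAt (isOpen_unitDisc.mem_nhds hζ))
      have hne_bot : (𝓝[≠] ζ).NeBot := by infer_instance
      have htendsto : Filter.Tendsto (fun x => ‖F x‖) (𝓝[≠] ζ)
          (𝓝 (‖F ζ‖)) :=
        (continuous_norm.continuousAt.comp hcont).continuousWithinAt.tendsto
      refine le_of_tendsto htendsto ?_
      have hmem : unitDisc ∈ 𝓝[≠] ζ :=
        mem_nhdsWithin_of_mem_nhds (isOpen_unitDisc.mem_nhds hζ)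
      filter_upwards [hmem, self_mem_nhdsWithin] with x hx hxne
      have hxne' : x ≠ ζ := hxne
      rw [hF_eq x hx hxne']
      have hxD : ‖x‖ < 1 := hx
      have hden_ne : hbr x ζ ≠ 0 := by
        rw [hbr_eq_mob, mob]
        exact div_ne_zero (sub_ne_zero.mpr (Ne.symm hxne')) (denom_ne_zero hxD hζ)
      rw [norm_div, div_le_one (norm_pos_iff.mpr hden_ne)]
      rw [hbr_eq_mob, hbr_eq_mob]
      exact schwarz_pick hg hζ hx
    · rw [hF_eq ζ hζ hne]
      have hζD : ‖ζ‖ < 1 := hζ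
      have hden_ne : hbr ζ a ≠ 0 := by
        rw [hbr_eq_mob, mob]
        exact div_ne_zero (sub_ne_zero.mpr (Ne.symm hne)) (denom_ne_zero hζD haD)
      rw [norm_div, div_le_one (norm_pos_iff.mpr hden_ne)]
      rw [hbr_eq_mob, hbr_eq_mob]
      exact schwarz_pick hg ha hζ
  by_cases hmax : ∃ ζ₀ ∈ unitDisc, 1 ≤ ‖F ζ₀‖
  · obtain ⟨ζ₀, hζ₀, h1⟩ := hmax
    have heq : ‖F ζ₀‖ = 1 := le_antisymm (hF_le ζ₀ hζ₀) h1
    right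
    have hmaxon : IsMaxOn (norm ∘ F) unitDisc ζ₀ := by
      intro ζ hζ
      simp only [Function.comp_apply, heq]
      exact hF_le ζ hζ
    have hconst := Complex.eqOn_of_isPreconnected_of_isMaxOn_norm
      (by rw [unitDisc_eq_ball]; exact (convex_ball (0:ℂ) 1).isPreconnected)
      isOpen_unitDisc hFdiff hζ₀ hmaxon
    refine ⟨F ζ₀, heq, fun ζ hζ hne => ?_⟩
    rw [← hF_eq ζ hζ hne]
    exact hconst hζ
  · push_neg at hmax
    left
    exact ⟨F, ⟨hFdiff, fun ζ hζ => hmax ζ hζ⟩, hF_eq⟩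

theorem hyperbolic_difference_quotients_bounded
    (n : ℕ) (z w : ℕ → ℂ)
    (hzD : ∀ j, 1 ≤ j → j ≤ n → z j ∈ unitDisc)
    (hwD : ∀ j, 1 ≤ j → j ≤ n → w j ∈ unitDisc)
    (hdist : ∀ i j, 1 ≤ i → i ≤ n → 1 ≤ j → j ≤ n → i ≠ j → z i ≠ z j)
    (f : ℂ → ℂ) (hf : IsSelfMap f)
    (hsol : ∀ j, 1 ≤ j → j ≤ n → f (z j) = w j) :
    ∀ k j, k ≤ n - 1 → k + 1 ≤ j → j ≤ n → ‖hdq z w k j‖ ≤ 1 := by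
  classical
  -- The key invariant: level `k` is either interpolated by a self-map or is a
  -- unimodular constant.
  have key : ∀ k, k ≤ n - 1 →
      (∃ g : ℂ → ℂ, IsSelfMap g ∧
        ∀ j, k + 1 ≤ j → j ≤ n → hdq z w k j = g (z j)) ∨
      (∃ lam : ℂ, ‖lam‖ = 1 ∧
        ∀ j, k + 1 ≤ j → j ≤ n → hdq z w k j = lam) := by
    intro k
    induction k with
    | zero =>
      intro _
      left
      exact ⟨f, hf, fun j h1 h2 => (hsol j h1 h2).symm ▸ rfl⟩
    | succ k ih =>
      intro hk1
      have hk : k ≤ n - 1 := le_trans (Nat.le_succ k) hk1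
      have hk1n : k + 1 ≤ n := le_trans hk1 (Nat.sub_le n 1)
      have haD : z (k + 1) ∈ unitDisc := hzD (k + 1) (Nat.le_add_left 1 k) hk1n
      rcases ih hk with ⟨g, hg, hgval⟩ | ⟨lam, hlam, hlamval⟩
      · -- main case: apply the dichotomy
        rcases step_dichotomy hg haD with ⟨G, hG, hGval⟩ | ⟨lam, hlam, hlamval⟩
        · left
          refine ⟨G, hG, fun j hj1 hj2 => ?_⟩
          have hj1' : 1 ≤ j := le_trans (Nat.le_add_left 1 (k + 1)) hj1
          have hjne : j ≠ k + 1 := by omega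
          have hzjD : z j ∈ unitDisc := hzD j hj1' hj2
          have hzne : z j ≠ z (k + 1) :=
            hdist j (k + 1) hj1' hj2 (Nat.le_add_left 1 k) hk1n hjne
          have e1 : hdq z w k j = g (z j) := hgval j (by omega) hj2
          have e2 : hdq z w k (k + 1) = g (z (k + 1)) := hgval (k + 1) le_rfl hk1n
          show hbr (hdq z w k j) (hdq z w k (k + 1)) / hbr (z j) (z (k + 1)) = G (z j)
          rw [e1, e2, hGval (z j) hzjD hzne]
        · right
          refine ⟨lam, hlam, fun j hj1 hj2 => ?_⟩
          have hj1' : 1 ≤ j := le_trans (Nat.le_add_left 1 (k + 1)) hj1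
          have hjne : j ≠ k + 1 := by omega
          have hzjD : z j ∈ unitDisc := hzD j hj1' hj2
          have hzne : z j ≠ z (k + 1) :=
            hdist j (k + 1) hj1' hj2 (Nat.le_add_left 1 k) hk1n hjne
          have e1 : hdq z w k j = g (z j) := hgval j (by omega) hj2
          have e2 : hdq z w k (k + 1) = g (z (k + 1)) := hgval (k + 1) le_rfl hk1n
          show hbr (hdq z w k j) (hdq z w k (k + 1)) / hbr (z j) (z (k + 1)) = lam
          rw [e1, e2]
          exact hlamval (z j) hzjD hzne
      · -- degenerate case: everything becomes 0
        left
        refine ⟨fun _ => 0, ⟨differentiableOn_const 0, fun ζ _ => by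
          simp [unitDisc]⟩, fun j hj1 hj2 => ?_⟩
        have e1 : hdq z w k j = lam := hlamval j (by omega) hj2
        have e2 : hdq z w k (k + 1) = lam := hlamval (k + 1) le_rfl hk1n
        show hbr (hdq z w k j) (hdq z w k (k + 1)) / hbr (z j) (z (k + 1)) = 0
        rw [e1, e2]
        have : hbr lam lam = 0 := by
          have h0 : (1:ℂ) - conj lam * lam = 0 := by
            have : conj lam * lam = Complex.normSq lam := by
              rw [Complex.normSq_eq_conj_mul_self]
            rw [this]
            have : Complex.normSq lam = 1 := by
              rw [← Complex.sq_norm, hlam]; norm_num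
            rw [this]; norm_num
          simp [hbr, h0]
        rw [this, zero_div]
  intro k j hk hj1 hj2
  rcases key k hk with ⟨g, hg, hgval⟩ | ⟨lam, hlam, hlamval⟩
  · rw [hgval j hj1 hj2]
    have hj1' : 1 ≤ j := le_trans (Nat.le_add_left 1 k) hj1
    exact le_of_lt (hg.2 (hzD j hj1' hj2))
  · rw [hlamval j hj1 hj2, hlam]
end
end

section
/- For a fixed η > 0, sup { β(z/2, w/2)/β(z, w) : |z| > r, |w| > r, β(z, w) ≥ η } tends to 0 as r → 1⁻. -/
open Complex Set ComplexConjugate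

noncomputable section

/-- Fundamental identity: |1 - b̄a|² = |a-b|² + (1-|a|²)(1-|b|²). -/
lemma hm_id1 (a b : ℂ) : Complex.normSq (1 - conj b * a) =
    Complex.normSq (a - b) + (1 - Complex.normSq a) * (1 - Complex.normSq b) := by
  simp only [Complex.normSq_apply, Complex.sub_re, Complex.sub_im, Complex.mul_re,
    Complex.mul_im, Complex.one_re, Complex.one_im, Complex.conj_re, Complex.conj_im]
  ring

lemma hm_id1' (a b : ℂ) : (‖1 - conj b * a‖) ^ 2 =
    (‖a - b‖) ^ 2 + (1 - (‖a‖) ^ 2) * (1 - (‖b‖) ^ 2) := by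
  simp only [Complex.sq_norm]
  exact hm_id1 a b

lemma pd_eq (a b : ℂ) : pd a b = ‖a - b‖ / ‖1 - conj b * a‖ := by
  unfold pd; exact norm_div _ _

lemma pd_nonneg (a b : ℂ) : 0 ≤ pd a b := norm_nonneg _

lemma abs_sub_lt_abs {a b : ℂ} (ha : ‖a‖ < 1) (hb : ‖b‖ < 1) :
    ‖a - b‖ < ‖1 - conj b * a‖ := by
  have h := hm_id1' a b
  have h1 : 0 < 1 - (‖a‖) ^ 2 := by nlinarith [norm_nonneg a]
  have h2 : 0 < 1 - (‖b‖) ^ 2 := by nlinarith [norm_nonneg b]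
  nlinarith [norm_nonneg (a - b), norm_nonneg (1 - conj b * a)]

lemma pd_lt_one {a b : ℂ} (ha : ‖a‖ < 1) (hb : ‖b‖ < 1) :
    pd a b < 1 := by
  have h := abs_sub_lt_abs ha hb
  have hD : 0 < ‖1 - conj b * a‖ :=
    lt_of_le_of_lt (norm_nonneg _) h
  rw [pd_eq]
  exact (div_lt_one hD).mpr h

/-- Key quantitative facts about the images z/2, w/2. -/
lemma pd_half_le {z w : ℂ} (hz : ‖z‖ < 1) (hw : ‖w‖ < 1) :
    pd (z / 2) (w / 2) ≤ 4 / 5 ∧ pd (z / 2) (w / 2) ≤ 2 / 3 * ‖z - w‖ := by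
  set E := ‖z / 2 - w / 2‖ with hE
  set D := ‖1 - conj (w / 2) * (z / 2)‖ with hD
  have hE0 : 0 ≤ E := norm_nonneg _
  have hEeq : E = ‖z - w‖ / 2 := by
    rw [hE, show z / 2 - w / 2 = (z - w) / 2 by ring, norm_div, Complex.norm_two]
  have habs : ‖conj (w / 2) * (z / 2)‖ ≤ 1 / 4 := by
    rw [norm_mul, Complex.norm_conj, norm_div, norm_div, Complex.norm_two]
    nlinarith [norm_nonneg z, norm_nonneg w]
  have hDlb : 3 / 4 ≤ D := by
    have h := norm_add_le (1 - conj (w / 2) * (z / 2)) (conj (w / 2) * (z / 2))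
    rw [show (1 : ℂ) - conj (w / 2) * (z / 2) + conj (w / 2) * (z / 2) = 1 by ring,
      norm_one] at h
    rw [hD]; linarith
  have hDub : D ≤ 5 / 4 := by
    have h := norm_sub_le (1 : ℂ) (conj (w / 2) * (z / 2))
    simp only [norm_one] at h
    rw [hD]; linarith
  have hKlb : 9 / 16 ≤ (1 - (‖z / 2‖) ^ 2) * (1 - (‖w / 2‖) ^ 2) := by
    have hz2 : ‖z / 2‖ ≤ 1 / 2 := by
      rw [norm_div]; simp only [Complex.norm_two]; linarith
    have hw2 : ‖w / 2‖ ≤ 1 / 2 := by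
      rw [norm_div]; simp only [Complex.norm_two]; linarith
    have a1 : (‖z / 2‖) ^ 2 ≤ 1 / 4 := by
      nlinarith [norm_nonneg (z / 2)]
    have b1 : (‖w / 2‖) ^ 2 ≤ 1 / 4 := by
      nlinarith [norm_nonneg (w / 2)]
    nlinarith
  have hid := hm_id1' (z / 2) (w / 2)
  rw [← hE, ← hD] at hid
  have hpd : pd (z / 2) (w / 2) = E / D := pd_eq _ _
  have hDpos : (0 : ℝ) < D := by linarith
  constructor
  · rw [hpd, div_le_iff₀ hDpos]
    nlinarith
  · rw [hpd, hEeq]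
    have h1 : ‖z - w‖ / 2 / D ≤ ‖z - w‖ / 2 / (3 / 4) :=
      div_le_div_of_nonneg_left (by positivity) (by norm_num) hDlb
    calc ‖z - w‖ / 2 / D ≤ ‖z - w‖ / 2 / (3 / 4) := h1
      _ = 2 / 3 * ‖z - w‖ := by ring

lemma hd_le_ten_mul {a b : ℂ} (h : pd a b ≤ 4 / 5) : hd a b ≤ 10 * pd a b := by
  have hp0 : 0 ≤ pd a b := pd_nonneg a b
  have h1 : 0 < 1 - pd a b := by linarith
  have hpos : (0 : ℝ) < (1 + pd a b) / (1 - pd a b) := by positivity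
  have hlog := Real.log_le_sub_one_of_pos hpos
  have heq : (1 + pd a b) / (1 - pd a b) - 1 = 2 * pd a b / (1 - pd a b) := by
    field_simp
    ring
  have h2 : 2 * pd a b / (1 - pd a b) ≤ 10 * pd a b := by
    rw [div_le_iff₀ h1]; nlinarith
  rw [heq] at hlog
  unfold hd
  linarith

lemma hd_nonneg {a b : ℂ} (h : pd a b < 1) : 0 ≤ hd a b := by
  have hp0 : 0 ≤ pd a b := pd_nonneg a b
  have h1 : 0 < 1 - pd a b := by linarith
  exact Real.log_nonneg ((one_le_div h1).mpr (by linarith))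

lemma hd_large {z w : ℂ} {r M : ℝ} (hz : ‖z‖ < 1) (hw : ‖w‖ < 1)
    (hrz : r < ‖z‖) (hr1 : r < 1) (hM : 0 < M)
    (hfar : M * (2 * (1 - r)) < ‖z - w‖) :
    M < (1 + pd z w) / (1 - pd z w) := by
  have heD := abs_sub_lt_abs hz hw
  set e := ‖z - w‖ with he
  set D := ‖1 - conj w * z‖ with hD
  have h1r : 0 < 1 - r := by linarith
  have he0 : 0 < e := lt_of_le_of_lt (by positivity) hfar
  have hDpos : 0 < D := lt_trans he0 heD
  -- D ≤ 1 - |z|² + e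
  have hzz : conj z * z = (Complex.normSq z : ℂ) := by
    rw [mul_comm, Complex.mul_conj]
  have hdecomp : (1 : ℂ) - conj w * z
      = (1 - (Complex.normSq z : ℂ)) + (conj z - conj w) * z := by
    linear_combination -hzz
  have h1 : ‖(1 - (Complex.normSq z : ℂ)) + (conj z - conj w) * z‖
      ≤ ‖1 - (Complex.normSq z : ℂ)‖ + ‖(conj z - conj w) * z‖ :=
    norm_add_le _ _
  have hnsq : Complex.normSq z = (‖z‖) ^ 2 := (Complex.sq_norm z).symm
  have hns1 : Complex.normSq z ≤ 1 := by
    rw [hnsq]; nlinarith [norm_nonneg z]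
  have h2 : ‖1 - (Complex.normSq z : ℂ)‖ = 1 - (‖z‖) ^ 2 := by
    rw [show (1 : ℂ) - (Complex.normSq z : ℂ) = ((1 - Complex.normSq z : ℝ) : ℂ) by
      push_cast; ring]
    rw [Complex.norm_real, Real.norm_of_nonneg (by linarith), hnsq]
  have h3 : ‖(conj z - conj w) * z‖ ≤ e := by
    rw [norm_mul, show conj z - conj w = conj (z - w) by rw [map_sub], Complex.norm_conj]
    rw [he]
    nlinarith [norm_nonneg (z - w), norm_nonneg z]
  have hDub : D ≤ 1 - (‖z‖) ^ 2 + e := by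
    rw [hD, hdecomp]; linarith
  have hz2 : 1 - (‖z‖) ^ 2 ≤ 2 * (1 - r) := by nlinarith
  have hDe : D - e ≤ 2 * (1 - r) := by linarith
  have hDepos : 0 < D - e := by linarith
  have hpD : pd z w = e / D := pd_eq z w
  have hp1 : pd z w < 1 := pd_lt_one hz hw
  have hp0 : 0 ≤ pd z w := pd_nonneg z w
  have h1mp : 0 < 1 - pd z w := by linarith
  have h6 : M * (D - e) < e := by nlinarith
  have h7 : M < D / (D - e) := by rw [lt_div_iff₀ hDepos]; linarith
  have h8 : D / (D - e) ≤ (1 + pd z w) / (1 - pd z w) := by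
    have h1p : 1 - pd z w = (D - e) / D := by rw [hpD]; field_simp
    have h9 : (1 : ℝ) / (1 - pd z w) = D / (D - e) := by
      rw [h1p, one_div_div]
    rw [← h9]
    exact (div_le_div_iff_of_pos_right h1mp).mpr (by linarith)
  linarith

theorem half_map_contraction_near_boundary (η : ℝ) (hη : 0 < η) :
    Filter.Tendsto
      (fun r : ℝ => sSup {t : ℝ | ∃ z ∈ unitDisc, ∃ w ∈ unitDisc,
        r < ‖z‖ ∧ r < ‖w‖ ∧ η ≤ hd z w ∧
        t = hd (z / 2) (w / 2) / hd z w})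
      (nhdsWithin 1 (Set.Iio 1)) (nhds 0) := by
  rw [Metric.tendsto_nhds]
  intro ε hε
  set δ : ℝ := 3 * ε * η / 40 with hδdef
  have hδ : 0 < δ := by positivity
  set r0 : ℝ := max 0 (1 - δ / (2 * Real.exp (16 / ε))) with hr0def
  have hr0lt : r0 < 1 := by
    apply max_lt one_pos
    have : 0 < δ / (2 * Real.exp (16 / ε)) := by positivity
    linarith
  filter_upwards [Ioo_mem_nhdsLT_of_mem (show (1:ℝ) ∈ Ioc r0 1 from ⟨hr0lt, le_refl _⟩)]
    with r hr
  obtain ⟨hrr0, hr1⟩ := hr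
  have hbound : ∀ t ∈ {t : ℝ | ∃ z ∈ unitDisc, ∃ w ∈ unitDisc,
      r < ‖z‖ ∧ r < ‖w‖ ∧ η ≤ hd z w ∧
      t = hd (z / 2) (w / 2) / hd z w}, t ≤ ε / 2 := by
    rintro t ⟨z, hz, w, hw, hrz, hrw, hηzw, rfl⟩
    simp only [unitDisc, mem_setOf_eq] at hz hw
    have hBpos : 0 < hd z w := lt_of_lt_of_le hη hηzw
    obtain ⟨hp45, hp23⟩ := pd_half_le hz hw
    have hA10 := hd_le_ten_mul hp45
    rcases le_or_gt (‖z - w‖) δ with hcase | hcase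
    · -- nearby case
      have hA : hd (z / 2) (w / 2) ≤ ε * η / 2 := by
        calc hd (z / 2) (w / 2) ≤ 10 * pd (z / 2) (w / 2) := hA10
          _ ≤ 10 * (2 / 3 * ‖z - w‖) := by
              nlinarith [pd_nonneg (z/2) (w/2)]
          _ ≤ 10 * (2 / 3 * δ) := by nlinarith [norm_nonneg (z - w)]
          _ = ε * η / 2 := by rw [hδdef]; ring
      calc hd (z / 2) (w / 2) / hd z w ≤ (ε * η / 2) / η :=
            div_le_div₀ (by positivity) hA hη hηzw
        _ = ε / 2 := by field_simp
    · -- far case: hd z w is large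
      have h1r : 0 < 1 - r := by linarith
      have hrgt : 1 - δ / (2 * Real.exp (16 / ε)) < r := lt_of_le_of_lt (le_max_right _ _) hrr0
      have hexppos : 0 < Real.exp (16 / ε) := Real.exp_pos _
      have hc1 : Real.exp (16 / ε) * (2 * (1 - r)) < δ := by
        have h4 : 1 - r < δ / (2 * Real.exp (16 / ε)) := by linarith
        have h5 := (lt_div_iff₀ (by positivity : (0:ℝ) < 2 * Real.exp (16 / ε))).mp h4
        nlinarith
      have hkey : Real.exp (16 / ε) < (1 + pd z w) / (1 - pd z w) :=
        hd_large hz hw hrz hr1 hexppos (by linarith)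
      have hBlarge : 16 / ε < hd z w := by
        unfold hd
        exact (Real.lt_log_iff_exp_lt (lt_trans hexppos hkey)).mpr hkey
      have hA8 : hd (z / 2) (w / 2) ≤ 8 := by
        calc hd (z / 2) (w / 2) ≤ 10 * pd (z / 2) (w / 2) := hA10
          _ ≤ 10 * (4 / 5) := by linarith
          _ = 8 := by norm_num
      calc hd (z / 2) (w / 2) / hd z w ≤ 8 / (16 / ε) :=
            div_le_div₀ (by norm_num) hA8 (by positivity) (le_of_lt hBlarge)
        _ = ε / 2 := by field_simp; ring
  have hnn : 0 ≤ sSup {t : ℝ | ∃ z ∈ unitDisc, ∃ w ∈ unitDisc,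
      r < ‖z‖ ∧ r < ‖w‖ ∧ η ≤ hd z w ∧
      t = hd (z / 2) (w / 2) / hd z w} := by
    apply Real.sSup_nonneg
    rintro t ⟨z, hz, w, hw, hrz, hrw, hηzw, rfl⟩
    simp only [unitDisc, mem_setOf_eq] at hz hw
    have hBpos : 0 < hd z w := lt_of_lt_of_le hη hηzw
    obtain ⟨hp45, _⟩ := pd_half_le hz hw
    exact div_nonneg (hd_nonneg (by linarith)) (le_of_lt hBpos)
  have hle := Real.sSup_le hbound (by positivity)
  rw [Real.dist_eq, sub_zero, _root_.abs_of_nonneg hnn]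
  exact lt_of_le_of_lt hle (by linarith)
end
end

section
/- Let g₀ = 0 and define recursively g_k(z) = [[z, z_{n+1−k}]·g_{k−1}(z), Δ^{n−k}_{n+1−k}] for k = 1, …, n, where z₁, …, z_n ∈ D are distinct and the Δ^k_j are the hyperbolic difference quotients of given data (w_j) with all |Δ^k_j| < 1. Then each g_k is an analytic self-map of D and g_n(z_j) = w_j for j = 1, …, n. -/
open Complex Set ComplexConjugate

noncomputable section

lemma normSq_id (a c : ℂ) :
    Complex.normSq (1 - conj c * a) - Complex.normSq (c - a) =
      (1 - Complex.normSq c) * (1 - Complex.normSq a) := by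
  simp [Complex.normSq_apply, Complex.mul_re, Complex.mul_im, Complex.sub_re, Complex.sub_im]
  ring

lemma denom_ne (a c : ℂ) (ha : ‖a‖ < 1) (hc : ‖c‖ < 1) :
    1 - conj c * a ≠ 0 := by
  intro h
  have : ‖conj c * a‖ < 1 := by
    rw [norm_mul, Complex.norm_conj]
    nlinarith [norm_nonneg a, norm_nonneg c]
  have h1 : conj c * a = 1 := by linear_combination -h
  rw [h1] at this; simp at this

lemma hbr_lt_one (a c : ℂ) (ha : ‖a‖ < 1) (hc : ‖c‖ < 1) :
    ‖hbr a c‖ < 1 := by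
  have hd := denom_ne a c ha hc
  rw [hbr, norm_div, div_lt_one (norm_pos_iff.mpr hd)]
  have := normSq_id a c
  have h1 : Complex.normSq a < 1 := by
    rw [← Complex.sq_norm] at *; nlinarith [norm_nonneg a]
  have h2 : Complex.normSq c < 1 := by
    rw [← Complex.sq_norm] at *; nlinarith [norm_nonneg c]
  have := Complex.sq_norm (1 - conj c * a)
  have := Complex.sq_norm (c - a)
  nlinarith [norm_nonneg (1 - conj c * a), norm_nonneg (c - a)]

lemma hbr_invol (a c : ℂ) (ha : ‖a‖ < 1) (hc : ‖c‖ < 1) :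
    hbr (hbr a c) c = a := by
  have hd := denom_ne a c ha hc
  have hd2 := denom_ne c c hc hc
  rw [hbr, hbr]
  have e1 : c - (c - a) / (1 - conj c * a) = a * (1 - conj c * c) / (1 - conj c * a) := by
    rw [eq_div_iff hd, sub_mul, div_mul_cancel₀ _ hd]; ring
  have e2 : 1 - conj c * ((c - a) / (1 - conj c * a)) = (1 - conj c * c) / (1 - conj c * a) := by
    field_simp; ring
  rw [e1, e2, mul_div_assoc]
  exact mul_div_cancel_right₀ a (div_ne_zero hd2 hd)

lemma hbr_self (a : ℂ) : hbr a a = 0 := by simp [hbr]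

lemma hbr_zero (c : ℂ) : hbr 0 c = c := by simp [hbr]

lemma selfmap_step (b c : ℂ) (hb : ‖b‖ < 1) (hc : ‖c‖ < 1)
    (G : ℂ → ℂ) (hG : IsSelfMap G) :
    IsSelfMap (fun ζ => hbr (hbr ζ b * G ζ) c) := by
  have hFmap : ∀ ζ, ζ ∈ unitDisc → ‖hbr ζ b * G ζ‖ < 1 := by
    intro ζ hζ
    have h1 : ‖hbr ζ b‖ < 1 := hbr_lt_one ζ b hζ hb
    have h2 : ‖G ζ‖ < 1 := hG.2 hζ
    rw [norm_mul]
    nlinarith [norm_nonneg (hbr ζ b), norm_nonneg (G ζ)]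
  have hF : DifferentiableOn ℂ (fun ζ => hbr ζ b * G ζ) unitDisc := by
    apply DifferentiableOn.mul _ hG.1
    simp only [hbr]
    apply DifferentiableOn.div
    · exact (differentiableOn_const b).sub differentiableOn_id
    · exact (differentiableOn_const 1).sub ((differentiableOn_const (conj b)).mul
        differentiableOn_id)
    · intro ζ hζ
      exact denom_ne ζ b hζ hb
  constructor
  · simp only [hbr]
    apply DifferentiableOn.div
    · exact (differentiableOn_const c).sub hF
    · exact (differentiableOn_const 1).sub ((differentiableOn_const (conj c)).mul hF)
    · intro ζ hζ
      exact denom_ne _ c (hFmap ζ hζ) hc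
  · intro ζ hζ
    exact hbr_lt_one _ c (hFmap ζ hζ) hc

theorem schur_algorithm_interpolation
    (n : ℕ) (hn : 1 ≤ n) (z w : ℕ → ℂ)
    (hzD : ∀ j, 1 ≤ j → j ≤ n → z j ∈ unitDisc)
    (hdist : ∀ i j, 1 ≤ i → i ≤ n → 1 ≤ j → j ≤ n → i ≠ j → z i ≠ z j)
    (hΔ : ∀ k j, k ≤ n - 1 → k + 1 ≤ j → j ≤ n → ‖hdq z w k j‖ < 1)
    (g : ℕ → ℂ → ℂ)
    (hg0 : ∀ ζ, g 0 ζ = 0)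
    (hgk : ∀ k, 1 ≤ k → k ≤ n → ∀ ζ,
      g k ζ = hbr (hbr ζ (z (n + 1 - k)) * g (k - 1) ζ) (hdq z w (n - k) (n + 1 - k))) :
    (∀ k, k ≤ n → IsSelfMap (g k)) ∧
    (∀ j, 1 ≤ j → j ≤ n → g n (z j) = w j) := by
  have key : ∀ k, k ≤ n → IsSelfMap (g k) ∧
      (1 ≤ k → ∀ j, n + 1 - k ≤ j → j ≤ n → g k (z j) = hdq z w (n - k) j) := by
    intro k
    induction k with
    | zero =>
      intro _
      refine ⟨?_, fun h => absurd h (by omega)⟩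
      have hE : g 0 = fun _ => (0 : ℂ) := funext hg0
      rw [hE]
      exact ⟨differentiableOn_const 0, fun ζ _ => by simp [unitDisc]⟩
    | succ k ih =>
      intro hk
      obtain ⟨ihS, ihI⟩ := ih (by omega)
      have hm1 : n + 1 - (k + 1) = n - k := by omega
      have hc : ‖hdq z w (n - (k + 1)) (n - k)‖ < 1 := by
        have := hΔ (n - (k + 1)) (n - k) (by omega) (by omega) (by omega)
        exact this
      have hzm : ‖z (n - k)‖ < 1 := hzD (n - k) (by omega) (by omega)
      have hgeq : g (k + 1) = fun ζ =>
          hbr (hbr ζ (z (n - k)) * g k ζ) (hdq z w (n - (k + 1)) (n - k)) := by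
        funext ζ
        have h := hgk (k + 1) (by omega) hk ζ
        rw [hm1] at h
        simpa using h
      constructor
      · rw [hgeq]
        exact selfmap_step _ _ hzm hc (g k) ihS
      · intro _ j hj1 hj2
        rw [hm1] at hj1
        rw [hgeq]
        simp only
        by_cases hje : j = n - k
        · rw [hje, hbr_self, zero_mul, hbr_zero]
        · have hjgt : n - k + 1 ≤ j := by omega
          have hk1 : 1 ≤ k := by omega
          have hgkj : g k (z j) = hdq z w (n - k) j := ihI hk1 j (by omega) hj2
          have hnk : n - k = (n - (k + 1)) + 1 := by omega
          have ha : ‖hdq z w (n - (k + 1)) j‖ < 1 :=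
            hΔ (n - (k + 1)) j (by omega) (by omega) hj2
          have hbne : hbr (z j) (z (n - k)) ≠ 0 := by
            apply div_ne_zero
            · exact sub_ne_zero.2 (hdist (n - k) j (by omega) (by omega) (by omega)
                (by omega) (by omega))
            · exact denom_ne (z j) (z (n - k)) (hzD j (by omega) hj2) hzm
          rw [hgkj, hnk]
          simp only [hdq]
          rw [← hnk, mul_div_cancel₀ _ hbne]
          exact hbr_invol _ _ ha hc
  refine ⟨fun k hk => (key k hk).1, fun j hj1 hj2 => ?_⟩
  have h := (key n le_rfl).2 hn j (by omega) hj2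
  rw [Nat.sub_self] at h
  exact h
end
end
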